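/- Let k be a field and let X and Y be profinite topological spaces (compact, Hausdorff, totally disconnected). Then the map sending a continuous function f : Y → X to the k-algebra homomorphism LC(X, k) → LC(Y, k) given by precomposition with f is a bijection between the set of continuous maps Y → X and the set of k-algebra homomorphisms LC(X, k) → LC(Y, k). In particular, the functor sending a profinite space X to the k-algebra of locally constant k-valued functions on X is fully faithful. -/

import Mathlib

/-!
STATEMENT 8: For profinite spaces X, Y and a field k, precomposition gives a bijection
between continuous maps Y → X and k-algebra homomorphisms LC(X, k) → LC(Y, k); in
particular X ↦ LC(X, k) is fully faithful.
-/

universe u v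

open LocallyConstant TopologicalSpace

section Aux

variable (k : Type u) [Field k] {X : Type v} [TopologicalSpace X]

lemma aux_charFn_mul {U V : Set X} (hU : IsClopen U) (hV : IsClopen V) :
    (charFn k hU) * (charFn k hV) = charFn k (hU.inter hV) := by
  ext x
  by_cases hx : x ∈ U <;> by_cases hx' : x ∈ V <;>
    simp [LocallyConstant.mul_apply, coe_charFn, Set.indicator_apply, hx, hx']

lemma aux_charFn_univ : charFn k (isClopen_univ : IsClopen (Set.univ : Set X)) = 1 := by
  ext x
  simp [coe_charFn, Set.indicator_apply]

lemma aux_charFn_empty : charFn k (isClopen_empty : IsClopen (∅ : Set X)) = 0 := by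
  ext x
  simp [coe_charFn, Set.indicator_apply]

lemma aux_charFn_add_compl {U : Set X} (hU : IsClopen U) :
    charFn k hU + charFn k hU.compl = 1 := by
  ext x
  by_cases hx : x ∈ U <;>
    simp [LocallyConstant.add_apply, coe_charFn, Set.indicator_apply, hx]

lemma aux_mul_charFn_fiber (g : LocallyConstant X k) (c : k) :
    g * charFn k (g.isLocallyConstant.isClopen_fiber c) =
      c • charFn k (g.isLocallyConstant.isClopen_fiber c) := by
  ext x
  by_cases hx : g x = c <;>
    simp [LocallyConstant.mul_apply, LocallyConstant.smul_apply, coe_charFn,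
      Set.indicator_apply, Set.mem_setOf_eq, hx]

/-- An element of a field equal to its square is `0` or `1`. -/
lemma aux_idem (t : k) (h : t * t = t) : t = 0 ∨ t = 1 := by
  have : t * (t - 1) = 0 := by ring_nf; linear_combination h
  rcases mul_eq_zero.mp this with h' | h'
  · exact Or.inl h'
  · exact Or.inr (sub_eq_zero.mp h')

end Aux

theorem stmt_8 (k : Type u) [Field k]
    (X Y : Type v) [TopologicalSpace X] [CompactSpace X] [T2Space X]
    [TotallyDisconnectedSpace X] [TopologicalSpace Y] [CompactSpace Y] [T2Space Y]
    [TotallyDisconnectedSpace Y] :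
    Function.Bijective
      (fun f : C(Y, X) =>
        (LocallyConstant.comapₐ k f :
          LocallyConstant X k →ₐ[k] LocallyConstant Y k)) := by
  constructor
  · -- Injectivity
    intro f g h
    ext y
    by_contra hne
    obtain ⟨U, hU, hfy, hgy⟩ :=
      compact_exists_isClopen_in_isOpen (isOpen_compl_singleton (x := g y)) hne
    have := congrFun (congrArg (fun ψ : LocallyConstant X k →ₐ[k] LocallyConstant Y k =>
      ⇑(ψ (charFn k hU))) h) y
    simp only [comapₐ_apply_apply, coe_comap, Function.comp_apply] at this
    rw [(charFn_eq_one (Y := k) (f y) hU).mpr hfy,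
        (charFn_eq_zero (Y := k) (g y) hU).mpr (fun hgU => hgy hgU rfl)] at this
    · exact one_ne_zero this
  · -- Surjectivity
    intro φ
    -- values of φ on characteristic functions are 0 or 1 pointwise
    have hval : ∀ {U : Set X} (hU : IsClopen U) (y : Y),
        φ (charFn k hU) y = 0 ∨ φ (charFn k hU) y = 1 := by
      intro U hU y
      apply aux_idem
      have : charFn k hU * charFn k hU = charFn k hU := by
        rw [aux_charFn_mul]
        congr 1
        exact Set.inter_self U
      calc φ (charFn k hU) y * φ (charFn k hU) y
          = (φ (charFn k hU) * φ (charFn k hU)) y := rfl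
        _ = φ (charFn k hU * charFn k hU) y := by rw [map_mul]
        _ = φ (charFn k hU) y := by rw [this]
    -- the "ultrafilter" of clopen sets at a point y
    set S : Y → Set (Set X) := fun y => {U | ∃ hU : IsClopen U, φ (charFn k hU) y = 1} with hS
    have huniv : ∀ y, Set.univ ∈ S y := by
      intro y
      exact ⟨isClopen_univ, by rw [aux_charFn_univ, map_one]; rfl⟩
    have hinter : ∀ y, ∀ U ∈ S y, ∀ V ∈ S y, U ∩ V ∈ S y := by
      rintro y U ⟨hU, hU1⟩ V ⟨hV, hV1⟩
      refine ⟨hU.inter hV, ?_⟩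
      rw [← aux_charFn_mul k hU hV, map_mul]
      calc (φ (charFn k hU) * φ (charFn k hV)) y
          = φ (charFn k hU) y * φ (charFn k hV) y := rfl
        _ = 1 := by rw [hU1, hV1, mul_one]
    have hnonempty : ∀ y, ∀ U ∈ S y, U.Nonempty := by
      rintro y U ⟨hU, hU1⟩
      rcases Set.eq_empty_or_nonempty U with rfl | h
      · rw [aux_charFn_empty, map_zero] at hU1
        exact absurd hU1.symm one_ne_zero
      · exact h
    -- construct the map f
    have key : ∀ y : Y, ∃ x : X, ∀ U ∈ S y, x ∈ U := by
      intro y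
      haveI : Nonempty (S y) := ⟨⟨Set.univ, huniv y⟩⟩
      have := IsCompact.nonempty_iInter_of_directed_nonempty_isCompact_isClosed
        (fun U : S y => (U : Set X))
        (fun U V => ⟨⟨U ∩ V, hinter y U U.2 V V.2⟩,
          Set.inter_subset_left, Set.inter_subset_right⟩)
        (fun U => hnonempty y U U.2)
        (fun U => U.2.choose.isClosed.isCompact)
        (fun U => U.2.choose.isClosed)
      obtain ⟨x, hx⟩ := this
      exact ⟨x, fun U hU => Set.mem_iInter.mp hx ⟨U, hU⟩⟩
    choose f hf using key
    -- characterization of membership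
    have hmem : ∀ (y : Y) {U : Set X} (hU : IsClopen U),
        f y ∈ U ↔ φ (charFn k hU) y = 1 := by
      intro y U hU
      constructor
      · intro hfy
        rcases hval hU y with h0 | h1
        · -- then the complement is in S y, contradiction
          have hsum : φ (charFn k hU) y + φ (charFn k hU.compl) y = 1 := by
            calc φ (charFn k hU) y + φ (charFn k hU.compl) y
                = (φ (charFn k hU) + φ (charFn k hU.compl)) y := rfl
              _ = φ (charFn k hU + charFn k hU.compl) y := by rw [map_add]
              _ = 1 := by rw [aux_charFn_add_compl, map_one]; rfl
          rw [h0, zero_add] at hsum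
          have : f y ∈ Uᶜ := hf y Uᶜ ⟨hU.compl, hsum⟩
          exact absurd hfy this
        · exact h1
      · intro h1
        exact hf y U ⟨hU, h1⟩
    -- continuity of f
    have hcont : Continuous f := by
      rw [isTopologicalBasis_isClopen.continuous_iff]
      intro U hU
      have : f ⁻¹' U = ⇑(φ (charFn k hU)) ⁻¹' {1} := by
        ext y
        simp only [Set.mem_preimage, Set.mem_singleton_iff]
        exact hmem y hU
      rw [this]
      exact (φ (charFn k hU)).isLocallyConstant.isOpen_fiber 1
    refine ⟨⟨f, hcont⟩, ?_⟩
    -- the constructed map induces φ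
    apply AlgHom.ext
    intro g
    ext y
    simp only [comapₐ_apply_apply, coe_comap, ContinuousMap.coe_mk, Function.comp_apply]
    set c := g (f y) with hc
    have hUc : IsClopen {x | g x = c} := g.isLocallyConstant.isClopen_fiber c
    have hfy : f y ∈ {x | g x = c} := hc.symm
    have h1 : φ (charFn k hUc) y = 1 := (hmem y hUc).mp hfy
    have := aux_mul_charFn_fiber k g c
    have happ : φ g y * φ (charFn k hUc) y = c * φ (charFn k hUc) y := by
      calc φ g y * φ (charFn k hUc) y
          = φ (g * charFn k hUc) y := by rw [map_mul]; rfl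
        _ = φ (c • charFn k hUc) y := by rw [this]
        _ = c * φ (charFn k hUc) y := by
            rw [map_smul]
            simp [LocallyConstant.smul_apply, smul_eq_mul]
    rw [h1, mul_one, mul_one] at happ
    exact happ.symm
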